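/- Let A be a commutative Noetherian ring, I ⊆ A an ideal, and C_• a chain complex of finitely generated A-modules. For k ≥ 0 let I^k C_• denote the subcomplex whose term in degree j is I^k C_j. Then for every degree j and every k ≥ 0: (1) I^k H_j(C_•) is contained in the image of the map H_j(I^k C_•) → H_j(C_•) induced by the inclusion of complexes; and (2) there exists m ≥ k such that the image of H_j(I^m C_•) → H_j(C_•) is contained in I^k H_j(C_•). (Together these say that the natural maps induce a pro-isomorphism between the pro-abelian groups {H_j(I^k C_•)}_k and {I^k H_j(C_•)}_k, i.e., homology of complexes of finitely generated modules commutes with the functor M ↦ {I^k M}.) -/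

import Mathlib

open CategoryTheory

section

variable (A : Type) [CommRing A] (I : Ideal A)

/-- The subcomplex `I^k C_•` of a chain complex `C_•` of `A`-modules, whose term in
degree `j` is the submodule `I^k C_j` (the differentials carry `I^k C_j` into
`I^k C_{j-1}`). -/
noncomputable def idealSmulSubcomplex (k : ℕ) (C : ChainComplex (ModuleCat A) ℤ) :
    ChainComplex (ModuleCat A) ℤ where
  X j := ModuleCat.of A (I ^ k • (⊤ : Submodule A (C.X j)) : Submodule A (C.X j))
  d i j := ModuleCat.ofHom ((C.d i j).hom.restrict (p := I ^ k • ⊤) (q := I ^ k • ⊤)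
    (fun x hx => by
      refine Submodule.smul_induction_on hx (fun a ha m _ => ?_) (fun u v hu hv => ?_)
      · rw [map_smul]
        exact Submodule.smul_mem_smul ha trivial
      · rw [map_add]
        exact Submodule.add_mem _ hu hv))
  shape i j h := by
    have h0 : C.d i j = 0 := C.shape i j h
    ext x
    show (C.d i j).hom x.1 = _
    rw [h0]
    rfl
  d_comp_d' i j l _ _ := by
    ext x
    show (C.d j l).hom ((C.d i j).hom x.1) = _
    have h3 : (C.d i j ≫ C.d j l).hom x.1 = (0 : C.X i ⟶ C.X l).hom x.1 := by
      rw [C.d_comp_d i j l]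
    exact h3

/-- The inclusion of chain complexes `I^k C_• ⟶ C_•`. -/
noncomputable def idealSmulSubcomplexIncl (k : ℕ) (C : ChainComplex (ModuleCat A) ℤ) :
    idealSmulSubcomplex A I k C ⟶ C where
  f j := ModuleCat.ofHom (I ^ k • (⊤ : Submodule A (C.X j))).subtype
  comm' i j _ := by
    ext x
    rfl

/-- A universe-polymorphic version of the Artin-Rees lemma. -/
theorem artinRees_poly {R : Type} [CommRing R] [IsNoetherianRing R] {M : Type*}
    [AddCommGroup M] [Module R M] [Module.Finite R M] (I : Ideal R) (N : Submodule R M) :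
    ∃ k : ℕ, ∀ n ≥ k, (I ^ n • ⊤ ⊓ N : Submodule R M) = I ^ (n - k) • (I ^ k • ⊤ ⊓ N) := by
  obtain ⟨n₀, p, hp⟩ := Module.Finite.exists_fin' R M
  obtain ⟨k, hk⟩ := Ideal.exists_pow_inf_eq_pow_smul I (N.comap p)
  refine ⟨k, fun n hn => ?_⟩
  have hmap : ∀ s : ℕ, Submodule.map p (I ^ s • ⊤ : Submodule R (Fin n₀ → R)) = I ^ s • ⊤ := by
    intro s
    rw [Submodule.map_smul'', Submodule.map_top, LinearMap.range_eq_top.2 hp]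
  calc (I ^ n • ⊤ ⊓ N : Submodule R M)
      = Submodule.map p (I ^ n • ⊤) ⊓ N := by rw [hmap]
    _ = Submodule.map p ((I ^ n • ⊤) ⊓ N.comap p) := Submodule.map_inf_eq_map_inf_comap
    _ = Submodule.map p (I ^ (n - k) • (I ^ k • ⊤ ⊓ N.comap p)) := by rw [hk n hn]
    _ = I ^ (n - k) • Submodule.map p (I ^ k • ⊤ ⊓ N.comap p) := by
          rw [Submodule.map_smul'']
    _ = I ^ (n - k) • (Submodule.map p (I ^ k • ⊤) ⊓ N) := by
          rw [← Submodule.map_inf_eq_map_inf_comap]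
    _ = I ^ (n - k) • (I ^ k • ⊤ ⊓ N) := by rw [hmap]

/-- Let `A` be a commutative Noetherian ring, `I ⊆ A` an ideal, and `C_•` a chain
complex of finitely generated `A`-modules.  Then for every degree `j` and every
`k ≥ 0`: (1) `I^k H_j(C_•)` is contained in the image of the map
`H_j(I^k C_•) → H_j(C_•)` induced by the inclusion of complexes; and (2) there exists
`m ≥ k` such that the image of `H_j(I^m C_•) → H_j(C_•)` is contained in
`I^k H_j(C_•)`.  Together these say that the natural maps induce a pro-isomorphism
between the pro-abelian groups `{H_j(I^k C_•)}_k` and `{I^k H_j(C_•)}_k`: homology of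
complexes of finitely generated modules commutes with the functor `M ↦ {I^k M}`. -/
theorem homology_idealSmulSubcomplex_pro_iso [IsNoetherianRing A]
    (C : ChainComplex (ModuleCat A) ℤ) (hfg : ∀ j : ℤ, Module.Finite A (C.X j))
    (j : ℤ) (k : ℕ) :
    ((I ^ k • ⊤ : Submodule A (C.homology j)) ≤
        LinearMap.range
          (HomologicalComplex.homologyMap (idealSmulSubcomplexIncl A I k C) j).hom) ∧
      ∃ m : ℕ, ∃ _hm : k ≤ m,
        LinearMap.range
            (HomologicalComplex.homologyMap (idealSmulSubcomplexIncl A I m C) j).hom ≤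
          (I ^ k • ⊤ : Submodule A (C.homology j)) := by
  classical
  set S : ShortComplex (ModuleCat A) := C.sc j with hS
  set πS : S.cycles →ₗ[A] S.homology := S.homologyπ.hom with hπS
  set ιS : S.cycles →ₗ[A] S.X₂ := S.iCycles.hom with hιS
  set gS : S.X₂ →ₗ[A] S.X₃ := S.g.hom with hgS
  have hπsurj : Function.Surjective πS :=
    (ModuleCat.epi_iff_surjective (S.homologyπ)).1 inferInstance
  have hιinj : Function.Injective ιS :=
    (ModuleCat.mono_iff_injective (S.iCycles)).1 inferInstance
  have hgι : ∀ z : S.cycles, gS (ιS z) = 0 := fun z => by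
    have := CategoryTheory.ConcreteCategory.congr_hom S.iCycles_g z
    rw [CategoryTheory.comp_apply] at this
    exact this.trans (by rfl)
  constructor
  · -- Part 1
    set T : ShortComplex (ModuleCat A) := (idealSmulSubcomplex A I k C).sc j with hT
    set φ : T ⟶ S :=
      (HomologicalComplex.shortComplexFunctor (ModuleCat A) _ j).map
        (idealSmulSubcomplexIncl A I k C) with hφ
    set Φ : T.homology →ₗ[A] S.homology :=
      (ShortComplex.homologyMap φ).hom with hΦ
    have key : ∀ (a : A), a ∈ I ^ k → ∀ y : S.homology,
        ∃ ζ : T.homology, Φ ζ = a • y := by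
      intro a ha y
      obtain ⟨z, hz⟩ := hπsurj y
      set v : C.X j := ιS z with hv
      have hmem : a • v ∈ (I ^ k • (⊤ : Submodule A (C.X j))) :=
        Submodule.smul_mem_smul ha trivial
      set u : (idealSmulSubcomplex A I k C).X j :=
        (⟨a • v, hmem⟩ : (I ^ k • (⊤ : Submodule A (C.X j)) : Submodule A (C.X j))) with hu
      have hτ₃inj : Function.Injective φ.τ₃ := fun p q hpq => Subtype.ext hpq
      have hgu : T.g u = 0 := by
        apply hτ₃inj
        have h1 := CategoryTheory.ConcreteCategory.congr_hom φ.comm₂₃ u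
        replace h1 : S.g (φ.τ₂ u) = φ.τ₃ (T.g u) := h1
        have h2 : S.g (φ.τ₂ u) = gS (a • v) := rfl
        have h3 : gS (a • v) = a • gS v := map_smul gS a v
        have h4 : gS v = 0 := hgι z
        have h5 : φ.τ₃ (T.g u) = (0 : S.X₃) :=
          h1.symm.trans (h2.trans (h3.trans (by rw [h4, smul_zero])))
        exact h5.trans (map_zero _).symm
      set ζc : T.cycles := T.moduleCatCyclesIso.inv ⟨u, hgu⟩ with hζc
      have hiζ : T.iCycles ζc = u :=
        ShortComplex.moduleCatCyclesIso_inv_iCycles_apply T ⟨u, hgu⟩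
      refine ⟨T.homologyπ ζc, ?_⟩
      have hnat : Φ (T.homologyπ ζc) = πS (ShortComplex.cyclesMap φ ζc) := by
        have := CategoryTheory.ConcreteCategory.congr_hom (ShortComplex.homologyπ_naturality φ) ζc
        rw [CategoryTheory.comp_apply, CategoryTheory.comp_apply] at this
        exact this
      have hcm : ShortComplex.cyclesMap φ ζc = a • z := by
        apply hιinj
        have h1 : ιS (ShortComplex.cyclesMap φ ζc) = φ.τ₂ (T.iCycles ζc) := by
          have := CategoryTheory.ConcreteCategory.congr_hom (ShortComplex.cyclesMap_i φ) ζc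
          rw [CategoryTheory.comp_apply, CategoryTheory.comp_apply] at this
          exact this
        have h2 : φ.τ₂ (T.iCycles ζc) = a • v := by rw [hiζ]; rfl
        have h3 : ιS (a • z) = a • v := by rw [map_smul, hv]; rfl
        rw [h1, h2, h3]
      rw [hnat, hcm, map_smul, hz]
    intro x hx
    refine Submodule.smul_induction_on hx (fun a ha y _ => ?_) (fun u v hu hv => ?_)
    · obtain ⟨ζ, hζ⟩ := key a ha y
      exact ⟨ζ, hζ⟩
    · exact Submodule.add_mem _ hu hv
  · -- Part 2
    have hfin : Module.Finite A (C.X j) := hfg j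
    set Z : Submodule A (C.X j) := LinearMap.ker gS with hZ
    obtain ⟨c, hc⟩ := artinRees_poly I Z
    refine ⟨k + c, ⟨Nat.le_add_right k c, ?_⟩⟩
    set m := k + c with hm
    set T : ShortComplex (ModuleCat A) := (idealSmulSubcomplex A I m C).sc j with hT
    set φ : T ⟶ S :=
      (HomologicalComplex.shortComplexFunctor (ModuleCat A) _ j).map
        (idealSmulSubcomplexIncl A I m C) with hφ
    set Φ : T.homology →ₗ[A] S.homology :=
      (ShortComplex.homologyMap φ).hom with hΦ
    rintro x ⟨h, rfl⟩
    have hπTsurj : Function.Surjective (T.homologyπ) :=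
      (ModuleCat.epi_iff_surjective _).1 inferInstance
    obtain ⟨ζ, rfl⟩ := hπTsurj h
    have hnat : Φ (T.homologyπ ζ) = πS (ShortComplex.cyclesMap φ ζ) := by
      have := CategoryTheory.ConcreteCategory.congr_hom (ShortComplex.homologyπ_naturality φ) ζ
      rw [CategoryTheory.comp_apply, CategoryTheory.comp_apply] at this
      exact this
    show Φ (T.homologyπ ζ) ∈ _
    rw [hnat]
    set z : S.cycles := ShortComplex.cyclesMap φ ζ with hz
    set v : C.X j := ιS z with hv
    have hv1 : v ∈ (I ^ m • (⊤ : Submodule A (C.X j))) := by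
      have h1 : ιS z = φ.τ₂ (T.iCycles ζ) := by
        have := CategoryTheory.ConcreteCategory.congr_hom (ShortComplex.cyclesMap_i φ) ζ
        rw [CategoryTheory.comp_apply, CategoryTheory.comp_apply] at this
        exact this
      rw [hv, h1]
      exact (T.iCycles ζ).2
    have hv2 : v ∈ Z := hgι z
    have hAR : v ∈ (I ^ k • (⊤ : Submodule A Z)).map Z.subtype := by
      rw [Submodule.map_smul'', Submodule.map_subtype_top]
      have heq := hc m (Nat.le_add_left c k)
      have hmk : m - c = k := by omega
      have hvm : v ∈ (I ^ m • ⊤ ⊓ Z : Submodule A (C.X j)) := ⟨hv1, hv2⟩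
      rw [heq, hmk] at hvm
      exact SetLike.le_def.mp (smul_mono_right _ inf_le_right) hvm
    obtain ⟨w, hw, hwv⟩ := hAR
    have hweq : w = ⟨v, hv2⟩ := Subtype.ext hwv
    set ψ : Z →ₗ[A] S.homology :=
      πS.comp ((S.moduleCatCyclesIso.inv : ModuleCat.of A (LinearMap.ker S.g.hom) ⟶ S.cycles).hom :
          Z →ₗ[A] S.cycles) with hψ
    have hzeq : z = S.moduleCatCyclesIso.inv ⟨v, hv2⟩ := by
      apply hιinj
      exact (ShortComplex.moduleCatCyclesIso_inv_iCycles_apply S ⟨v, hv2⟩).symm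
    have hxψ : πS z = ψ w := by
      rw [hweq, hψ, hzeq]
      rfl
    rw [hxψ]
    have hmem2 : ψ w ∈ (I ^ k • (⊤ : Submodule A Z)).map ψ :=
      Submodule.mem_map_of_mem hw
    rw [Submodule.map_smul''] at hmem2
    exact SetLike.le_def.mp (smul_mono_right _ le_top) hmem2

end
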